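/- Let P be a (2,k)-puzzle. If P is a uniquely solvable puzzle, then P is a strong uniquely solvable puzzle. -/
import Mathlib


/-- Exactly two of the three propositions hold. -/
def ExactlyTwo (A B C : Prop) : Prop :=
  (A ∧ B ∧ ¬C) ∨ (A ∧ ¬B ∧ C) ∨ (¬A ∧ B ∧ C)

/-- At least two of the three propositions hold. -/
def AtLeastTwo (A B C : Prop) : Prop :=
  (A ∧ B) ∨ (A ∧ C) ∨ (B ∧ C)

/-- A puzzle of width `k` is a finite set of rows in `{1,2,3}^k`; we use the
alphabet `Fin 3` whose three elements are denoted `1`, `2`, `3` (`3 = 0`).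
`P` is a strong uniquely solvable puzzle (strong USP). -/
def IsSUSP {k : ℕ} (P : Finset (Fin k → Fin 3)) : Prop :=
  ∀ π₁ π₂ π₃ : Equiv.Perm {r // r ∈ P},
    (π₁ = π₂ ∧ π₂ = π₃) ∨
    ∃ (r : {r // r ∈ P}) (c : Fin k),
      ExactlyTwo ((π₁ r).1 c = 1) ((π₂ r).1 c = 2) ((π₃ r).1 c = 3)

/-- `P` is a uniquely solvable puzzle (USP). -/
def IsUSP {k : ℕ} (P : Finset (Fin k → Fin 3)) : Prop :=
  ∀ π₁ π₂ π₃ : Equiv.Perm {r // r ∈ P},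
    (π₁ = π₂ ∧ π₂ = π₃) ∨
    ∃ (r : {r // r ∈ P}) (c : Fin k),
      AtLeastTwo ((π₁ r).1 c = 1) ((π₂ r).1 c = 2) ((π₃ r).1 c = 3)


/-- Every size-2 uniquely solvable puzzle is a strong uniquely solvable
puzzle. -/
theorem usp_card_two_is_susp {k : ℕ} (P : Finset (Fin k → Fin 3))
    (hcard : P.card = 2) (hP : IsUSP P) : IsSUSP P := by
  intro π₁ π₂ π₃
  rcases hP π₁ π₂ π₃ with h | ⟨r, c, h⟩
  · exact Or.inl h
  · right
    refine ⟨r, c, ?_⟩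
    have hcard2 : Fintype.card {r // r ∈ P} = 2 := by
      simpa [Fintype.card_coe] using hcard
    have key : ¬(((π₁ r).1 c = 1) ∧ ((π₂ r).1 c = 2) ∧ ((π₃ r).1 c = 3)) := by
      rintro ⟨h1, h2, h3⟩
      obtain ⟨i, j, hij, hfeq⟩ :=
        Fintype.exists_ne_map_eq_of_card_lt ![π₁ r, π₂ r, π₃ r]
          (by rw [hcard2]; simp)
      have hv : ∀ m : Fin 3, ((![π₁ r, π₂ r, π₃ r] m : {r // r ∈ P}).1 c)
          = ![1, 2, 3] m := by
        intro m; fin_cases m <;> simp [h1, h2, h3]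
      have : (![(1 : Fin 3), 2, 3]) i = (![(1 : Fin 3), 2, 3]) j := by
        rw [← hv, ← hv, hfeq]
      fin_cases i <;> fin_cases j <;> simp_all
    rcases h with ⟨hA, hB⟩ | ⟨hA, hC⟩ | ⟨hB, hC⟩
    · exact Or.inl ⟨hA, hB, fun hC => key ⟨hA, hB, hC⟩⟩
    · exact Or.inr (Or.inl ⟨hA, fun hB => key ⟨hA, hB, hC⟩, hC⟩)
    · exact Or.inr (Or.inr ⟨fun hA => key ⟨hA, hB, hC⟩, hB, hC⟩)
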